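/- Let F be a quadratic form on ℝⁿ with real symmetric coefficient matrix. F is rational (i.e., equals a nonzero real scalar multiple of a form with rational coefficients) if and only if F(x)/F(y) ∈ ℚ for all x, y ∈ ℚⁿ with F(y) ≠ 0, provided F does not vanish identically on ℚⁿ. -/

import Mathlib

open Matrix

theorem stmt_3 (n : ℕ) (M : Matrix (Fin n) (Fin n) ℝ) (hsym : M.IsSymm) (hdet : M.det ≠ 0)
    (hnonvanish : ∃ y : Fin n → ℚ,
      (fun i => (y i : ℝ)) ⬝ᵥ M.mulVec (fun i => (y i : ℝ)) ≠ 0) :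
    (∃ (c : ℝ) (M₀ : Matrix (Fin n) (Fin n) ℚ), c ≠ 0 ∧ M = c • M₀.map (fun q => (q : ℝ))) ↔
      (∀ x y : Fin n → ℚ,
        (fun i => (y i : ℝ)) ⬝ᵥ M.mulVec (fun i => (y i : ℝ)) ≠ 0 →
        ∃ q : ℚ,
          (fun i => (x i : ℝ)) ⬝ᵥ M.mulVec (fun i => (x i : ℝ)) =
            q * ((fun i => (y i : ℝ)) ⬝ᵥ M.mulVec (fun i => (y i : ℝ)))) := by
  -- key cast lemma
  have cast_eval : ∀ (M₀ : Matrix (Fin n) (Fin n) ℚ) (x : Fin n → ℚ),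
      (fun i => (x i : ℝ)) ⬝ᵥ (M₀.map (fun q => (q:ℝ))).mulVec (fun i => (x i : ℝ))
        = ((x ⬝ᵥ M₀.mulVec x : ℚ) : ℝ) := by
    intro M₀ x
    simp [dotProduct, mulVec, Matrix.map_apply]
  -- symmetry lemma
  have symm_swap : ∀ u v : Fin n → ℝ, u ⬝ᵥ M.mulVec v = v ⬝ᵥ M.mulVec u := by
    intro u v
    rw [dotProduct_mulVec, dotProduct_comm, ← mulVec_transpose, hsym.eq]
  constructor
  · rintro ⟨c, M₀, hc, rfl⟩ x y hy
    simp only [smul_mulVec, dotProduct_smul, smul_eq_mul, cast_eval] at hy ⊢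
    set a : ℚ := x ⬝ᵥ M₀.mulVec x
    set b : ℚ := y ⬝ᵥ M₀.mulVec y
    have hb : b ≠ 0 := by
      intro hb0
      apply hy
      rw [hb0]; simp
    refine ⟨a / b, ?_⟩
    push_cast
    field_simp
  · intro h
    obtain ⟨y₀, hy₀⟩ := hnonvanish
    set c : ℝ := (fun i => (y₀ i : ℝ)) ⬝ᵥ M.mulVec (fun i => (y₀ i : ℝ)) with hc
    -- for every rational vector z, Q z * c = F z
    have hQ : ∀ z : Fin n → ℚ, ∃ q : ℚ,
        (fun i => (z i : ℝ)) ⬝ᵥ M.mulVec (fun i => (z i : ℝ)) = q * c := fun z => h z y₀ hy₀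
    choose Q hQspec using hQ
    set e : Fin n → (Fin n → ℚ) := fun i => Pi.single i 1 with he
    refine ⟨c, fun i j => (Q (e i + e j) - Q (e i) - Q (e j)) / 2, hy₀, ?_⟩
    ext i j
    -- real cast of e i
    have hcast : ∀ i : Fin n, (fun k => ((e i k : ℚ) : ℝ)) = Pi.single i (1:ℝ) := by
      intro i
      funext k
      simp [he, Pi.single_apply, apply_ite]
    have hsum : ∀ i j : Fin n, (fun k => ((e i + e j) k : ℝ))
        = Pi.single i (1:ℝ) + Pi.single j (1:ℝ) := by
      intro i j
      have : (fun k => ((e i + e j) k : ℝ))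
          = (fun k => ((e i k : ℚ) : ℝ)) + (fun k => ((e j k : ℚ) : ℝ)) := by
        funext k
        simp
      rw [this, hcast, hcast]
    -- evaluate the three forms
    have hii : (fun k => ((e i) k : ℝ)) ⬝ᵥ M.mulVec (fun k => ((e i) k : ℝ)) = M i i := by
      rw [hcast]
      simp [mulVec_single, Pi.single_apply, dotProduct]
    have hjj : (fun k => ((e j) k : ℝ)) ⬝ᵥ M.mulVec (fun k => ((e j) k : ℝ)) = M j j := by
      rw [hcast]
      simp [mulVec_single, Pi.single_apply, dotProduct]
    have hij : (fun k => ((e i + e j) k : ℝ)) ⬝ᵥ M.mulVec (fun k => ((e i + e j) k : ℝ))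
        = M i i + M j j + 2 * M i j := by
      rw [hsum]
      have h1 : Pi.single i (1:ℝ) ⬝ᵥ M.mulVec (Pi.single j 1) = M i j := by
        simp [mulVec_single, Pi.single_apply, dotProduct]
      have h2 : Pi.single j (1:ℝ) ⬝ᵥ M.mulVec (Pi.single i 1) = M i j := by
        rw [symm_swap]; exact h1
      have h3 : Pi.single i (1:ℝ) ⬝ᵥ M.mulVec (Pi.single i 1) = M i i := by
        simp [mulVec_single, Pi.single_apply, dotProduct]
      have h4 : Pi.single j (1:ℝ) ⬝ᵥ M.mulVec (Pi.single j 1) = M j j := by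
        simp [mulVec_single, Pi.single_apply, dotProduct]
      rw [mulVec_add, dotProduct_add, add_dotProduct, add_dotProduct, h1, h2, h3, h4]
      ring
    have e1 := hQspec (e i + e j)
    have e2 := hQspec (e i)
    have e3 := hQspec (e j)
    rw [hij] at e1
    rw [hii] at e2
    rw [hjj] at e3
    simp only [Matrix.smul_apply, Matrix.map_apply, smul_eq_mul]
    push_cast
    have : 2 * M i j = (Q (e i + e j) - Q (e i) - Q (e j)) * c := by
      linarith [e1, e2, e3]
    have h' : M i j = c * (((Q (e i + e j) - Q (e i) - Q (e j)) / 2 : ℚ) : ℝ) := by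
      push_cast; linarith [this]
    exact h'
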